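/- Let 𝒢 be a leveled graph over a finite set Q with |Q| = n, let I = {1, …, k} and let B : I → 2^Q. Then 𝒢 is GC accepting if and only if 𝒢 admits an odd GC ranking. -/

import Mathlib

set_option linter.unusedSectionVars false
set_option maxHeartbeats 1000000

/-!
STATEMENT 1: Let 𝒢 be a leveled graph over a finite set Q with |Q| = n, let
I = {1, …, k} and let B : I → 2^Q. Then 𝒢 is GC accepting if and only if 𝒢
admits an odd GC ranking.

A GC rank is modelled as a pair `(t, o) : ℕ × Option ℕ`: `(t, some u)` is an
odd GC rank with numeric rank `t ∈ {1,3,…,2n−1}` and index `u ∈ I`;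
`(t, none)` is an even GC rank `t ∈ {0,2,…,2n}`.
-/

/-- A GC rank: numeric rank together with an optional index (present iff odd). -/
abbrev GCRank := ℕ × Option ℕ

/-- Validity of a GC rank with respect to `n` states and `k` indices. -/
def GCRankValid (n k : ℕ) (r : GCRank) : Prop :=
  match r.2 with
  | some u => Odd r.1 ∧ r.1 ≤ 2 * n - 1 ∧ 1 ≤ u ∧ u ≤ k
  | none => Even r.1 ∧ r.1 ≤ 2 * n


namespace GC

variable {Q : Type} [Fintype Q]
variable (E : Q × ℕ → Q × ℕ → Prop) (B : ℕ → Set Q) (k : ℕ)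

/-- Edge relation restricted to a subset. -/
def ER (T : Set (Q × ℕ)) (a b : Q × ℕ) : Prop := a ∈ T ∧ b ∈ T ∧ E a b

/-- Reachability within a subset. -/
def Reach (T : Set (Q × ℕ)) : Q × ℕ → Q × ℕ → Prop := Relation.ReflTransGen (ER E T)

/-- Infinitely many reachable vertices within `T`. -/
def Inf (T : Set (Q × ℕ)) (v : Q × ℕ) : Prop := {w | Reach E T v w}.Infinite

/-- `v` is `B j`-free within `T`. -/
def Free (T : Set (Q × ℕ)) (j : ℕ) (v : Q × ℕ) : Prop :=
  v ∈ T ∧ ∀ w, Reach E T v w → w.1 ∉ B j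

lemma reach_mem {T : Set (Q × ℕ)} {v w : Q × ℕ} (hv : v ∈ T) (h : Reach E T v w) :
    w ∈ T := by
  induction h with
  | refl => exact hv
  | tail _ e _ => exact e.2.1

lemma free_step {T : Set (Q × ℕ)} {j : ℕ} {v u : Q × ℕ}
    (hf : Free E B T j v) (he : ER E T v u) : Free E B T j u :=
  ⟨he.2.1, fun w hw => hf.2 w (Relation.ReflTransGen.head he hw)⟩

variable (hE : ∀ v v' : Q × ℕ, E v v' → v'.2 = v.2 + 1)
include hE

lemma succ_finite (T : Set (Q × ℕ)) (v : Q × ℕ) : {u | ER E T v u}.Finite := by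
  apply Set.Finite.subset ((Set.finite_univ (α := Q)).prod (Set.finite_singleton (v.2+1)))
  rintro ⟨q, l⟩ h
  exact ⟨trivial, hE _ _ h.2.2⟩

lemma koenig {T : Set (Q × ℕ)} {v : Q × ℕ} (h : Inf E T v) :
    ∃ u, ER E T v u ∧ Inf E T u := by
  by_contra hcon
  push_neg at hcon
  apply h
  have : {w | Reach E T v w} ⊆ {v} ∪ ⋃ u ∈ {u | ER E T v u}, {w | Reach E T u w} := by
    intro w hw
    rcases (Relation.ReflTransGen.cases_head hw) with h1 | ⟨u, hu, hr⟩
    · exact Or.inl (by simp [h1.symm])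
    · exact Or.inr (Set.mem_biUnion hu hr)
  apply Set.Finite.subset _ this
  apply (Set.finite_singleton v).union
  apply Set.Finite.biUnion (succ_finite E hE T v)
  intro u hu
  have := hcon u hu
  simpa [Inf, Set.not_infinite] using this

/-- Build an infinite path through a successor-total predicate. -/
lemma path_builder (P : Q × ℕ → Prop) (v0 : Q × ℕ) (h0 : P v0)
    (hs : ∀ v, P v → ∃ u, P u ∧ E v u) :
    ∃ ρ : ℕ → Q × ℕ, ρ 0 = v0 ∧ (∀ i, E (ρ i) (ρ (i+1))) ∧ ∀ i, P (ρ i) := by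
  have F : ∀ x : {v // P v}, {u : {v // P v} // E x.1 u.1} := by
    intro x
    have := hs x.1 x.2
    exact ⟨⟨this.choose, this.choose_spec.1⟩, this.choose_spec.2⟩
  let g : {v // P v} → {v // P v} := fun x => (F x).1
  refine ⟨fun m => (g^[m] ⟨v0, h0⟩).1, rfl, ?_, fun i => (g^[i] ⟨v0, h0⟩).2⟩
  intro i
  show E (g^[i] ⟨v0, h0⟩).1 (g^[i+1] ⟨v0, h0⟩).1
  rw [Function.iterate_succ_apply']
  exact (F (g^[i] ⟨v0, h0⟩)).2

lemma path_level {ρ : ℕ → Q × ℕ} (hρ : ∀ i, E (ρ i) (ρ (i+1))) :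
    ∀ m, (ρ m).2 = (ρ 0).2 + m := by
  intro m
  induction m with
  | zero => rfl
  | succ m ih => rw [hE _ _ (hρ m), ih]; ring

/-- A path staying in a successor-total predicate inside T gives infiniteness. -/
lemma inf_of_path {T : Set (Q × ℕ)} {ρ : ℕ → Q × ℕ}
    (hmem : ∀ i, ρ i ∈ T) (hρ : ∀ i, E (ρ i) (ρ (i+1))) : Inf E T (ρ 0) := by
  have hr : ∀ m, Reach E T (ρ 0) (ρ m) := by
    intro m
    induction m with
    | zero => exact Relation.ReflTransGen.refl
    | succ m ih => exact ih.tail ⟨hmem m, hmem (m+1), hρ m⟩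
  have hinj : Function.Injective ρ := by
    intro a b hab
    have := path_level E hE hρ
    have ha := this a; have hb := this b
    rw [hab] at ha
    omega
  exact Set.infinite_of_injective_forall_mem hinj hr


omit hE in
/-- Turn reachability into an indexed finite path. -/
lemma rtg_path {T : Set (Q × ℕ)} {a b : Q × ℕ} (h : Reach E T a b) :
    ∃ (m : ℕ) (p : ℕ → Q × ℕ), p 0 = a ∧ p m = b ∧ ∀ i < m, ER E T (p i) (p (i+1)) := by
  induction h with
  | refl => exact ⟨0, fun _ => a, rfl, rfl, by omega⟩
  | @tail b c _ hbc ih =>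
    obtain ⟨m, p, hp0, hpm, hstep⟩ := ih
    refine ⟨m+1, fun i => if i ≤ m then p i else c, by simp [hp0], by simp, ?_⟩
    intro i hi
    rcases Nat.lt_or_ge i m with h1 | h1
    · simpa [Nat.le_of_lt h1, Nat.succ_le_of_lt h1] using hstep i h1
    · have : i = m := by omega
      subst this
      simpa [hpm] using hbc

omit hE in
/-- Chunk: from `v ∈ T`, a nonempty path to a `B j` vertex, ending in `T`. -/
lemma chunk {T : Set (Q × ℕ)} (hsucc : ∀ v ∈ T, ∃ u, u ∈ T ∧ E v u)
    (hnofree : ∀ v, ¬ Free E B T j v) {v : Q × ℕ} (hv : v ∈ T) :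
    ∃ (m : ℕ) (p : ℕ → Q × ℕ), 1 ≤ m ∧ p 0 = v ∧ p m ∈ T ∧
      (∀ i < m, ER E T (p i) (p (i+1))) ∧ ∃ i ≤ m, (p i).1 ∈ B j := by
  have := hnofree v
  rw [Free] at this
  push_neg at this
  obtain ⟨w, hw, hwB⟩ := this hv
  have hwT : w ∈ T := by
    induction hw with
    | refl => exact hv
    | tail _ e _ => exact e.2.1
  obtain ⟨m, p, hp0, hpm, hstep⟩ := rtg_path E hw
  obtain ⟨u, huT, hEu⟩ := hsucc w hwT
  refine ⟨m+1, fun i => if i ≤ m then p i else u, by omega, by simp [hp0], by simp [huT], ?_,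
    ⟨m, by omega, by simpa [hpm] using hwB⟩⟩
  intro i hi
  rcases Nat.lt_or_ge i m with h1 | h1
  · simpa [Nat.le_of_lt h1, Nat.succ_le_of_lt h1] using hstep i h1
  · obtain rfl : m = i := by omega
    show ER E T (if m ≤ m then p m else u) (if m + 1 ≤ m then p (m+1) else u)
    rw [if_pos le_rfl, if_neg (by omega), hpm]
    exact ⟨hwT, huT, hEu⟩


section Key

variable (hk : 1 ≤ k)
variable (hAcc : ∀ ρ : ℕ → Q × ℕ, (∀ i, E (ρ i) (ρ (i + 1))) →
        ∃ j, 1 ≤ j ∧ j ≤ k ∧ {i | (ρ i).1 ∈ B j}.Finite)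
variable {T : Set (Q × ℕ)} (hsucc : ∀ v ∈ T, ∃ u, u ∈ T ∧ E v u)

include hk hAcc hsucc

omit hE in

/-- Key lemma: in a nonempty, successor-total subgraph of a GC-accepting graph
there is a free vertex for some valid index. -/
lemma keyFree (hne : T.Nonempty) :
    ∃ j, 1 ≤ j ∧ j ≤ k ∧ ∃ v, Free E B T j v := by
  by_contra hcon
  push_neg at hcon
  -- the state: a finite path inside T
  let St := {pm : (ℕ → Q × ℕ) × ℕ // pm.1 pm.2 ∈ T ∧ ∀ i < pm.2, ER E T (pm.1 i) (pm.1 (i+1))}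
  have stepEx : ∀ (s : ℕ) (x : St), ∃ y : St,
      x.1.2 + 1 ≤ y.1.2 ∧ (∀ i ≤ x.1.2, y.1.1 i = x.1.1 i) ∧
      ∃ i, x.1.2 ≤ i ∧ i ≤ y.1.2 ∧ (y.1.1 i).1 ∈ B (s % k + 1) := by
    intro s x
    obtain ⟨⟨p, M⟩, hend, hsteps⟩ := x
    have hjk : s % k + 1 ≤ k := Nat.mod_lt s (by omega)
    obtain ⟨m, q, hm1, hq0, hqm, hqstep, i0, hi0, hi0B⟩ :=
      chunk E B hsucc (hcon (s % k + 1) (by omega) hjk) hend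
    refine ⟨⟨⟨fun i => if i ≤ M then p i else q (i - M), M + m⟩, ?_, ?_⟩, ?_, ?_, ?_⟩
    · show (if M + m ≤ M then p (M+m) else q (M + m - M)) ∈ T
      rw [if_neg (by omega)]
      simpa using hqm
    · -- steps
      intro i hi
      have key : ∀ l, M ≤ l → l ≤ M + m →
          (if l ≤ M then p l else q (l - M)) = q (l - M) := by
        intro l h1 h2
        rcases Nat.eq_or_lt_of_le h1 with h3 | h3
        · rw [if_pos (by omega)]
          have : l - M = 0 := by omega
          rw [this, hq0, ← h3]
        · rw [if_neg (by omega)]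
      show ER E T (if i ≤ M then p i else q (i - M))
        (if i + 1 ≤ M then p (i+1) else q (i + 1 - M))
      rcases Nat.lt_or_ge i M with h1 | h1
      · rw [if_pos (by omega), if_pos (by omega)]
        exact hsteps i h1
      · rw [key i h1 (by omega), key (i+1) (by omega) (by omega)]
        have : i + 1 - M = (i - M) + 1 := by omega
        rw [this]
        exact hqstep (i - M) (by omega)
    · exact Nat.add_le_add_left hm1 M
    · intro i hi
      show (if i ≤ M then p i else q (i - M)) = p i
      rw [if_pos hi]
    · refine ⟨M + i0, Nat.le_add_right M i0, Nat.add_le_add_left hi0 M, ?_⟩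
      show (if M + i0 ≤ M then p (M + i0) else q (M + i0 - M)).1 ∈ B (s % k + 1)
      rcases Nat.eq_zero_or_pos i0 with h1 | h1
      · subst h1
        rw [if_pos (by omega)]
        simpa [hq0] using hi0B
      · rw [if_neg (by omega)]
        simpa using hi0B
  obtain ⟨v0, hv0⟩ := hne
  let c : ℕ → St := fun s => Nat.rec ⟨⟨fun _ => v0, 0⟩, hv0, by omega⟩
    (fun s prev => (stepEx s prev).choose) s
  have hc : ∀ s, (c s).1.2 + 1 ≤ (c (s+1)).1.2 ∧
      (∀ i ≤ (c s).1.2, (c (s+1)).1.1 i = (c s).1.1 i) ∧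
      ∃ i, (c s).1.2 ≤ i ∧ i ≤ (c (s+1)).1.2 ∧ ((c (s+1)).1.1 i).1 ∈ B (s % k + 1) :=
    fun s => (stepEx s (c s)).choose_spec
  have mlen : ∀ s, s ≤ (c s).1.2 := by
    intro s
    induction s with
    | zero => exact Nat.zero_le _
    | succ s ih => have := (hc s).1; omega
  have mmono : ∀ s s', s ≤ s' → (c s).1.2 ≤ (c s').1.2 := by
    intro s s' h
    induction s' with
    | zero =>
      have h0 : s = 0 := Nat.le_zero.mp h
      subst h0; exact le_rfl
    | succ s' ih =>
      rcases Nat.eq_or_lt_of_le h with h1 | h1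
      · subst h1; exact le_rfl
      · exact le_trans (ih (by omega)) (by have := (hc s').1; omega)
  have agree : ∀ s s', s ≤ s' → ∀ i ≤ (c s).1.2, (c s').1.1 i = (c s).1.1 i := by
    intro s s' h
    induction s' with
    | zero =>
      have : s = 0 := by omega
      subst this; intro i _; rfl
    | succ s' ih =>
      rcases Nat.eq_or_lt_of_le h with h1 | h1
      · subst h1; intro i _; rfl
      · intro i hi
        have h2 : s ≤ s' := by omega
        rw [(hc s').2.1 i (le_trans hi (mmono s s' h2)), ih h2 i hi]
  set ρ : ℕ → Q × ℕ := fun i => (c i).1.1 i with hρdef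
  have ρeq : ∀ s i, i ≤ (c s).1.2 → (c s).1.1 i = ρ i := by
    intro s i hi
    rcases le_total i s with h | h
    · rw [agree i s h i (mlen i)]
    · exact (agree s i h i hi).symm
  have hedge : ∀ i, ER E T (ρ i) (ρ (i+1)) := by
    intro i
    have h1 : i < (c (i+1)).1.2 := by have := mlen (i+1); omega
    have := (c (i+1)).2.2 i h1
    rwa [ρeq (i+1) i (by omega), ρeq (i+1) (i+1) (by omega)] at this
  obtain ⟨j, hj1, hjk, hfin⟩ := hAcc ρ (fun i => (hedge i).2.2)
  -- but B j is visited infinitely often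
  have hinf : ∀ N, ∃ i, N ≤ i ∧ (ρ i).1 ∈ B j := by
    intro N
    set s := N * k + (j - 1) with hs
    have hsmod : s % k + 1 = j := by
      have h1 : s % k = (j - 1) % k := by
        rw [hs, Nat.add_comm, Nat.add_mul_mod_self_right]
      have h2 : (j - 1) % k = j - 1 := Nat.mod_eq_of_lt (by omega)
      omega
    obtain ⟨i, hi1, hi2, hiB⟩ := (hc s).2.2
    rw [hsmod] at hiB
    have hsN : N ≤ s := by
      have : N * 1 ≤ N * k := Nat.mul_le_mul_left N hk
      omega
    have hNi : N ≤ i := by have := mlen s; omega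
    exact ⟨i, hNi, by rwa [ρeq (s+1) i hi2] at hiB⟩
  obtain ⟨b, hb⟩ := hfin.bddAbove
  obtain ⟨i, hi, hiB⟩ := hinf (b + 1)
  exact absurd (hb hiB) (by omega)
  
end Key


section Stages

variable (hk : 1 ≤ k)
variable (hAcc : ∀ ρ : ℕ → Q × ℕ, (∀ i, E (ρ i) (ρ (i + 1))) →
        ∃ j, 1 ≤ j ∧ j ≤ k ∧ {i | (ρ i).1 ∈ B j}.Finite)

open Classical in
/-- Chosen index for the free-vertex removal from `T`. -/
noncomputable def idx (T : Set (Q × ℕ)) : ℕ :=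
  if h : ∃ j, 1 ≤ j ∧ j ≤ k ∧ ∃ v, Free E B T j v then h.choose else 1

omit hE in
include hk in
lemma idx_bounds (T : Set (Q × ℕ)) : 1 ≤ idx E B k T ∧ idx E B k T ≤ k := by
  unfold idx
  split_ifs with h
  · exact ⟨h.choose_spec.1, h.choose_spec.2.1⟩
  · exact ⟨le_rfl, hk⟩

omit hE hk in
lemma idx_free {T : Set (Q × ℕ)} (h : ∃ j, 1 ≤ j ∧ j ≤ k ∧ ∃ v, Free E B T j v) :
    ∃ v, Free E B T (idx E B k T) v := by
  unfold idx
  rw [dif_pos h]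
  exact h.choose_spec.2.2

/-- The stage sets: even→odd removes finite vertices, odd→even removes free ones. -/
noncomputable def S : ℕ → Set (Q × ℕ)
  | 0 => Set.univ
  | t+1 => if Even t then S t \ {v | v ∈ S t ∧ ¬ Inf E (S t) v}
           else S t \ {v | Free E B (S t) (idx E B k (S t)) v}

omit hE hk in
lemma S_succ_even {t : ℕ} (ht : Even t) :
    S E B k (t+1) = S E B k t \ {v | v ∈ S E B k t ∧ ¬ Inf E (S E B k t) v} := by
  simp [S, ht]

omit hE hk in
lemma S_succ_odd {t : ℕ} (ht : ¬ Even t) :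
    S E B k (t+1) = S E B k t \ {v | Free E B (S E B k t) (idx E B k (S E B k t)) v} := by
  simp [S, ht]

omit hE hk in
lemma S_succ_sub (t : ℕ) : S E B k (t+1) ⊆ S E B k t := by
  by_cases ht : Even t
  · rw [S_succ_even E B k ht]; exact Set.diff_subset
  · rw [S_succ_odd E B k ht]; exact Set.diff_subset

omit hE hk in
lemma S_mono {t t' : ℕ} (h : t ≤ t') : S E B k t' ⊆ S E B k t := by
  induction t' with
  | zero => have h0 : t = 0 := Nat.le_zero.mp h; subst h0; exact le_rfl
  | succ t' ih =>
    rcases Nat.eq_or_lt_of_le h with h1 | h1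
    · subst h1; exact le_rfl
    · exact (S_succ_sub E B k t').trans (ih (by omega))

omit hk in
lemma mem_S_odd {t : ℕ} (ht : Even t) {v : Q × ℕ} :
    v ∈ S E B k (t+1) ↔ v ∈ S E B k t ∧ Inf E (S E B k t) v := by
  rw [S_succ_even E B k ht]
  constructor
  · rintro ⟨h1, h2⟩
    simp only [Set.mem_setOf_eq, not_and, not_not] at h2
    exact ⟨h1, h2 h1⟩
  · rintro ⟨h1, h2⟩
    exact ⟨h1, by simp [h2]⟩

/-- After removing the finite vertices, every vertex has a successor in the set. -/
lemma succ_total_odd {t : ℕ} (ht : Even t) :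
    ∀ v ∈ S E B k (t+1), ∃ u, u ∈ S E B k (t+1) ∧ E v u := by
  intro v hv
  rw [mem_S_odd E B k hE ht] at hv
  obtain ⟨u, hu, hinf⟩ := koenig E hE hv.2
  exact ⟨u, (mem_S_odd E B k hE ht).mpr ⟨hu.2.1, hinf⟩, hu.2.2⟩

include hE hk hAcc

/-- Width bound: levels of `S (2i+1)` eventually have at most `n - i` vertices. -/
lemma width (i : ℕ) : ∃ L, ∀ l, L ≤ l →
    {q : Q | (q, l) ∈ S E B k (2*i+1)}.ncard ≤ Fintype.card Q - i := by
  induction i with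
  | zero =>
    refine ⟨0, fun l _ => ?_⟩
    calc {q : Q | (q, l) ∈ S E B k 1}.ncard ≤ (Set.univ : Set Q).ncard :=
          Set.ncard_le_ncard (Set.subset_univ _) Set.finite_univ
      _ = Fintype.card Q - 0 := by
          rw [Set.ncard_univ, Nat.card_eq_fintype_card, Nat.sub_zero]
  | succ i ih =>
    obtain ⟨L, hL⟩ := ih
    by_cases hne : (S E B k (2*i+1)).Nonempty
    · -- find a free vertex and an infinite free path from it
      have hst := succ_total_odd E B k hE (t := 2*i) (by simp [Nat.even_mul])
      have hkey := keyFree E B k hk hAcc (fun v hv => hst v hv) hne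
      obtain ⟨x, hx⟩ := idx_free E B k hkey
      set T := S E B k (2*i+1) with hT
      set j0 := idx E B k T with hj0
      obtain ⟨ρ, hρ0, hρE, hρP⟩ := path_builder E hE (Free E B T j0) x hx (by
        intro v hv
        obtain ⟨u, huT, huE⟩ := hst v hv.1
        exact ⟨u, free_step E B hv ⟨hv.1, huT, huE⟩, huE⟩)
      refine ⟨max L x.2, fun l hl => ?_⟩
      set w := ρ (l - x.2) with hw
      have hwlvl : w.2 = l := by
        rw [hw, path_level E hE hρE, hρ0]
        omega
      have hwfree : Free E B T j0 w := hρP _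
      have hwnot : w ∉ S E B k (2*i+2) := by
        have h2 : S E B k (2*i+1+1) = T \ {v | Free E B T j0 v} := by
          rw [S_succ_odd E B k (by simp [Nat.even_add_one, Nat.even_mul])]
        rw [show 2*i+2 = 2*i+1+1 by ring, h2]
        intro hcon
        exact hcon.2 hwfree
      have hsub : {q : Q | (q, l) ∈ S E B k (2*(i+1)+1)} ⊆
          {q : Q | (q, l) ∈ T} \ {w.1} := by
        intro q hq
        have h1 : (q, l) ∈ S E B k (2*i+2) :=
          S_mono E B k (by omega) hq
        refine ⟨S_succ_sub E B k (2*i+1) (by rwa [show 2*i+1+1 = 2*i+2 by ring]), ?_⟩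
        intro hqe
        simp only [Set.mem_singleton_iff] at hqe
        apply hwnot
        have : (q, l) = w := by
          rw [hqe]
          exact Prod.ext rfl hwlvl.symm
        rwa [← this]
      have hwmem : w.1 ∈ {q : Q | (q, l) ∈ T} := by
        have : w ∈ T := hwfree.1
        simpa [← hwlvl] using this
      calc {q : Q | (q, l) ∈ S E B k (2*(i+1)+1)}.ncard
          ≤ ({q : Q | (q, l) ∈ T} \ {w.1}).ncard :=
            Set.ncard_le_ncard hsub (Set.toFinite _)
        _ = {q : Q | (q, l) ∈ T}.ncard - 1 :=
            Set.ncard_diff_singleton_of_mem hwmem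
        _ ≤ Fintype.card Q - (i+1) := by
            have := hL l (le_trans (le_max_left _ _) hl)
            omega
    · -- S (2i+1) is empty, so everything later is too
      refine ⟨0, fun l _ => ?_⟩
      rw [Set.not_nonempty_iff_eq_empty] at hne
      have : {q : Q | (q, l) ∈ S E B k (2*(i+1)+1)} = ∅ := by
        ext q
        simp only [Set.mem_setOf_eq, Set.mem_empty_iff_false, iff_false]
        intro hq
        have := S_mono E B k (show 2*i+1 ≤ 2*(i+1)+1 by omega) hq
        rw [hne] at this
        exact this
      simp [this]

omit hE hk hAcc in
lemma S_zero : S E B k 0 = Set.univ := by simp [S]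

/-- The construction terminates: `S (2n+1)` is empty. -/
lemma S_empty : S E B k (2 * Fintype.card Q + 1) = ∅ := by
  by_contra hcon
  rw [← Ne, ← Set.nonempty_iff_ne_empty] at hcon
  obtain ⟨v, hv⟩ := hcon
  obtain ⟨L, hL⟩ := width E B k hE hk hAcc (Fintype.card Q)
  have hst := succ_total_odd E B k hE (t := 2 * Fintype.card Q) (by simp [Nat.even_mul])
  obtain ⟨ρ, hρ0, hρE, hρP⟩ := path_builder E hE
    (· ∈ S E B k (2 * Fintype.card Q + 1)) v hv (by
      intro u hu
      obtain ⟨u', h1, h2⟩ := hst u hu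
      exact ⟨u', h1, h2⟩)
  set l := v.2 + L with hl
  have hlvl : (ρ L).2 = l := by rw [path_level E hE hρE, hρ0]
  have hmem : (ρ L).1 ∈ {q : Q | (q, l) ∈ S E B k (2 * Fintype.card Q + 1)} := by
    have := hρP L
    simpa [← hlvl] using this
  have hcard := hL l (by omega)
  have hpos : 0 < {q : Q | (q, l) ∈ S E B k (2 * Fintype.card Q + 1)}.ncard :=
    (Set.ncard_pos (Set.toFinite _)).mpr ⟨_, hmem⟩
  omega

end Stages

end GC

theorem gc_ranking_correct
    {Q : Type} [Fintype Q] (n k : ℕ) (hn : 1 ≤ n) (hk : 1 ≤ k)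
    (hcard : Fintype.card Q = n)
    (E : Q × ℕ → Q × ℕ → Prop)
    (hE : ∀ v v' : Q × ℕ, E v v' → v'.2 = v.2 + 1)
    (B : ℕ → Set Q) :
    -- 𝒢 is GC accepting
    (∀ ρ : ℕ → Q × ℕ, (∀ i, E (ρ i) (ρ (i + 1))) →
        ∃ j, 1 ≤ j ∧ j ≤ k ∧ {i | (ρ i).1 ∈ B j}.Finite)
    ↔ -- 𝒢 admits an odd GC ranking
      ∃ f : Q × ℕ → GCRank,
        (∀ v, GCRankValid n k (f v)) ∧
        -- (1) odd rank with index j → not a B(j)-vertex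
        (∀ v j, (f v).2 = some j → v.1 ∉ B j) ∧
        -- (2) edges: numeric ranks non-increasing, and equal numeric odd ranks
        -- have equal index
        (∀ v v', E v v' → (f v').1 ≤ (f v).1 ∧
          (∀ j j', (f v).2 = some j → (f v').2 = some j' →
            (f v).1 = (f v').1 → j = j')) ∧
        -- odd: every infinite path visits infinitely many odd vertices
        (∀ ρ : ℕ → Q × ℕ, (∀ i, E (ρ i) (ρ (i + 1))) →
          {i | ((f (ρ i)).2).isSome}.Infinite) := by
  constructor
  · -- Acceptance → odd GC ranking (the ranking construction)
    intro hAcc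
    classical
    have hemp : GC.S E B k (2 * Fintype.card Q + 1) = ∅ :=
      GC.S_empty E B k hE hk hAcc
    have hne : ∀ v : Q × ℕ, (2 * Fintype.card Q) ∈ {t | v ∉ GC.S E B k (t + 1)} := by
      intro v
      simp only [Set.mem_setOf_eq, hemp]
      exact Set.notMem_empty v
    set rk : Q × ℕ → ℕ := fun v => sInf {t | v ∉ GC.S E B k (t + 1)} with hrk
    have rk_notmem : ∀ v, v ∉ GC.S E B k (rk v + 1) :=
      fun v => Nat.sInf_mem ⟨_, hne v⟩
    have rk_le : ∀ v, rk v ≤ 2 * Fintype.card Q := fun v => Nat.sInf_le (hne v)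
    have rk_mem : ∀ v, v ∈ GC.S E B k (rk v) := by
      intro v
      rcases h : rk v with _ | t
      · rw [GC.S_zero]; exact Set.mem_univ v
      · by_contra hcon
        have : rk v ≤ t := Nat.sInf_le hcon
        omega
    -- if rank is even, the vertex was removed as a finite vertex
    have rem_even : ∀ v, Even (rk v) → ¬ GC.Inf E (GC.S E B k (rk v)) v := by
      intro v hpar
      by_contra h
      exact rk_notmem v (by
        rw [GC.S_succ_even E B k hpar]
        exact ⟨rk_mem v, by simp only [Set.mem_setOf_eq, not_and, not_not]; intro _; exact h⟩)
    -- if rank is odd, the vertex was removed as a free vertex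
    have rem_odd : ∀ v, ¬ Even (rk v) →
        GC.Free E B (GC.S E B k (rk v)) (GC.idx E B k (GC.S E B k (rk v))) v := by
      intro v hpar
      by_contra h
      exact rk_notmem v (by
        rw [GC.S_succ_odd E B k hpar]
        exact ⟨rk_mem v, h⟩)
    have rk_edge : ∀ v v', E v v' → rk v' ≤ rk v := by
      intro v v' hvv
      apply Nat.sInf_le
      show v' ∉ GC.S E B k (rk v + 1)
      by_cases hv'm : v' ∈ GC.S E B k (rk v)
      · by_cases hpar : Even (rk v)
        · rw [GC.S_succ_even E B k hpar]
          rintro ⟨-, hno⟩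
          simp only [Set.mem_setOf_eq, not_and, not_not] at hno
          apply rem_even v hpar
          apply (hno hv'm).mono
          intro w hw
          exact Relation.ReflTransGen.head ⟨rk_mem v, hv'm, hvv⟩ hw
        · rw [GC.S_succ_odd E B k hpar]
          rintro ⟨-, hno⟩
          exact hno (GC.free_step E B (rem_odd v hpar) ⟨rk_mem v, hv'm, hvv⟩)
      · intro hcon
        exact hv'm (GC.S_succ_sub E B k (rk v) hcon)
    refine ⟨fun v => (rk v, if Even (rk v) then none
      else some (GC.idx E B k (GC.S E B k (rk v)))), ?_, ?_, ?_, ?_⟩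
    · -- validity
      intro v
      by_cases hpar : Even (rk v)
      · simp only [hpar, if_pos]
        exact ⟨hpar, by rw [← hcard]; exact rk_le v⟩
      · simp only [hpar, if_neg, GCRankValid]
        have hodd : Odd (rk v) := Nat.not_even_iff_odd.mp hpar
        obtain ⟨hb1, hb2⟩ := GC.idx_bounds E B k hk (GC.S E B k (rk v))
        refine ⟨hodd, ?_, hb1, hb2⟩
        have := rk_le v
        obtain ⟨m, hm⟩ := hodd
        omega
    · -- condition (1)
      intro v j hj
      by_cases hpar : Even (rk v)
      · simp [hpar] at hj
      · replace hj : (if Even (rk v) then none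
            else some (GC.idx E B k (GC.S E B k (rk v)))) = some j := hj
        rw [if_neg hpar] at hj
        obtain rfl := Option.some.inj hj
        exact (rem_odd v hpar).2 v Relation.ReflTransGen.refl
    · -- condition (2)
      intro v v' hvv
      refine ⟨rk_edge v v' hvv, ?_⟩
      intro j j' hj hj' hnum
      simp only at hnum
      by_cases hpar : Even (rk v)
      · simp [hpar] at hj
      · by_cases hpar' : Even (rk v')
        · simp [hpar'] at hj'
        · replace hj : (if Even (rk v) then none
              else some (GC.idx E B k (GC.S E B k (rk v)))) = some j := hj
          replace hj' : (if Even (rk v') then none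
              else some (GC.idx E B k (GC.S E B k (rk v')))) = some j' := hj'
          rw [if_neg hpar] at hj
          rw [if_neg hpar'] at hj'
          rw [← Option.some.inj hj, ← Option.some.inj hj', hnum]
    · -- odd ranking
      intro ρ hρ
      set g : ℕ → ℕ := fun i => rk (ρ i) with hg
      have gmono : ∀ i i', i ≤ i' → g i' ≤ g i := by
        intro i i' h
        induction i' with
        | zero => have h0 : i = 0 := Nat.le_zero.mp h; subst h0; exact le_rfl
        | succ i' ih =>
          rcases Nat.eq_or_lt_of_le h with h1 | h1
          · subst h1; exact le_rfl
          · exact le_trans (rk_edge _ _ (hρ i')) (ih (by omega))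
      obtain ⟨N, hN⟩ : ∃ N, g N = sInf (Set.range g) := Nat.sInf_mem (Set.range_nonempty g)
      have heq : ∀ i, N ≤ i → g i = g N := by
        intro i hi
        refine le_antisymm (gmono N i hi) ?_
        rw [hN]
        exact Nat.sInf_le ⟨i, rfl⟩
      have hodd : ¬ Even (g N) := by
        intro hpar
        apply rem_even (ρ N) hpar
        have hmem : ∀ d, (fun d => ρ (N + d)) d ∈ GC.S E B k (g N) := by
          intro d
          have h3 := heq (N + d) (by omega)
          show ρ (N + d) ∈ GC.S E B k (g N)
          rw [h3.symm]
          exact rk_mem (ρ (N + d))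
        have hedges : ∀ d, E ((fun d => ρ (N + d)) d) ((fun d => ρ (N + d)) (d + 1)) := by
          intro d
          have h4 : N + (d + 1) = (N + d) + 1 := by omega
          simp only [h4]
          exact hρ (N + d)
        have := GC.inf_of_path E hE (T := GC.S E B k (g N))
          (ρ := fun d => ρ (N + d)) hmem hedges
        simpa using this
      apply Set.Infinite.mono (s := Set.Ici N)
      · intro i hi
        have := heq i hi
        simp only [Set.mem_setOf_eq]
        have hpar : ¬ Even (rk (ρ i)) := by rw [hg] at this; simp only at this; rw [this]; exact hodd
        simp [hpar]
      · exact Set.Ici_infinite N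
  · -- odd GC ranking → acceptance
    rintro ⟨f, hval, hB, hedge, hoddr⟩ ρ hρ
    set g : ℕ → ℕ := fun i => (f (ρ i)).1 with hg
    have gmono : ∀ i i', i ≤ i' → g i' ≤ g i := by
      intro i i' h
      induction i' with
      | zero => have h0 : i = 0 := Nat.le_zero.mp h; subst h0; exact le_rfl
      | succ i' ih =>
        rcases Nat.eq_or_lt_of_le h with h1 | h1
        · subst h1; exact le_rfl
        · exact le_trans ((hedge _ _ (hρ i')).1) (ih (by omega))
    obtain ⟨N, hN⟩ : ∃ N, g N = sInf (Set.range g) := Nat.sInf_mem (Set.range_nonempty g)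
    have heq : ∀ i, N ≤ i → g i = g N := by
      intro i hi
      refine le_antisymm (gmono N i hi) ?_
      rw [hN]
      exact Nat.sInf_le ⟨i, rfl⟩
    obtain ⟨i0, hi0mem, hi0⟩ := (hoddr ρ hρ).exists_gt N
    obtain ⟨j0, hj0⟩ := Option.isSome_iff_exists.mp hi0mem
    have hval0 := hval (ρ i0)
    rw [GCRankValid, hj0] at hval0
    obtain ⟨hodd0, -, hjb1, hjb2⟩ := hval0
    have hall : ∀ i, i0 ≤ i → (f (ρ i)).2 = some j0 := by
      intro i hi
      induction i with
      | zero => have h0 : i0 = 0 := Nat.le_zero.mp hi; rw [← h0]; exact hj0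
      | succ i ih =>
        rcases Nat.eq_or_lt_of_le hi with h1 | h1
        · rw [← h1]; exact hj0
        · have hih := ih (by omega)
          have hnum : (f (ρ i)).1 = (f (ρ (i + 1))).1 := by
            have e1 : g i = g N := heq i (by omega)
            have e2 : g (i + 1) = g N := heq (i + 1) (by omega)
            show g i = g (i + 1)
            omega
          rcases h2 : (f (ρ (i + 1))).2 with _ | j'
          · -- impossible: the rank would be even and odd at once
            have hv := hval (ρ (i + 1))
            rw [GCRankValid, h2] at hv
            have hvi := hval (ρ i)
            rw [GCRankValid, hih] at hvi
            have : Odd ((f (ρ (i+1))).1) := by rw [← hnum]; exact hvi.1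
            exact absurd hv.1 (Nat.not_even_iff_odd.mpr this)
          · have := (hedge _ _ (hρ i)).2 j0 j' hih h2 hnum
            rw [this]
    have hfin : {i | (ρ i).1 ∈ B j0} ⊆ Set.Iio i0 := by
      intro i hi
      by_contra hcon
      simp only [Set.mem_Iio, not_lt] at hcon
      exact hB (ρ i) j0 (hall i hcon) hi
    exact ⟨j0, hjb1, hjb2, (Set.finite_Iio i0).subset hfin⟩
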